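/- arXiv:2110.15842 — 2 statements merged into one kernel-verified Lean document; each statement's English description precedes it below -/
import Mathlib

section
/- Let G be a k-regular graph on n vertices with second eigenvalue λ_2 and smallest eigenvalue λ_n. If k − λ_2 < n/2, then 2(k − (k−λ_2)^2/n) ≤ λ_2(λ_2+1)(2λ_2+1)/(1 − 2(k−λ_2)/n) − λ_2(3λ_2+1). In particular, since the left-hand side exceeds k + λ_2, this gives an upper bound on k in terms of λ_2 and n. -/
open Matrix

section AuxStmt18
open Finset

lemma stmt18_sum_pow_three {n : ℕ} (f : Fin n → ℝ) :
    (∑ t, f t) ^ 3 = ∑ t : Fin n × Fin n × Fin n, f t.1 * f t.2.1 * f t.2.2 := by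
  rw [Fintype.sum_prod_type]
  calc (∑ t, f t) ^ 3 = ∑ t1, f t1 * ((∑ t2, f t2) * (∑ t3, f t3)) := by
        rw [← Finset.sum_mul]; ring
    _ = ∑ t1, ∑ t2, f t1 * f t2 * (∑ t3, f t3) := by
        refine Finset.sum_congr rfl fun t1 _ => ?_
        rw [Finset.sum_mul, Finset.mul_sum]
        exact Finset.sum_congr rfl fun t2 _ => by ring
    _ = ∑ t1, ∑ t2, ∑ t3, f t1 * f t2 * f t3 := by
        refine Finset.sum_congr rfl fun t1 _ => Finset.sum_congr rfl fun t2 _ => ?_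
        rw [Finset.mul_sum]
    _ = ∑ t1, ∑ y : Fin n × Fin n, f t1 * f y.1 * f y.2 := by
        refine Finset.sum_congr rfl fun t1 _ => ?_
        rw [Fintype.sum_prod_type]

lemma stmt18_star_real_matrix {n : ℕ} (M : Matrix (Fin n) (Fin n) ℝ) : star M = Mᵀ := by
  ext u v; simp [conjTranspose_apply]

lemma stmt18_key1 {n : ℕ} {A : Matrix (Fin n) (Fin n) ℝ} (hA : A.IsHermitian) (x y : Fin n → ℝ) :
    ((hA.eigenvectorUnitary : Matrix (Fin n) (Fin n) ℝ)ᵀ *ᵥ x) ⬝ᵥ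
      ((hA.eigenvectorUnitary : Matrix (Fin n) (Fin n) ℝ)ᵀ *ᵥ y) = x ⬝ᵥ y := by
  set M := (hA.eigenvectorUnitary : Matrix (Fin n) (Fin n) ℝ) with hM
  have hMM : M * Mᵀ = 1 := by
    rw [← stmt18_star_real_matrix]
    exact (Matrix.mem_unitaryGroup_iff).mp hA.eigenvectorUnitary.2
  rw [dotProduct_mulVec, mulVec_transpose, vecMul_vecMul, hMM, vecMul_one]

lemma stmt18_key2 {n : ℕ} {A : Matrix (Fin n) (Fin n) ℝ} (hA : A.IsHermitian) (x : Fin n → ℝ) :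
    x ⬝ᵥ (A *ᵥ x) = ∑ i, hA.eigenvalues i *
      (((hA.eigenvectorUnitary : Matrix (Fin n) (Fin n) ℝ)ᵀ *ᵥ x) i)^2 := by
  set M := (hA.eigenvectorUnitary : Matrix (Fin n) (Fin n) ℝ) with hM
  nth_rewrite 1 [hA.spectral_theorem]
  rw [Unitary.conjStarAlgAut_apply]
  rw [stmt18_star_real_matrix, ← mulVec_mulVec, ← mulVec_mulVec]
  rw [dotProduct_mulVec]
  nth_rewrite 1 [← transpose_transpose M]
  rw [← mulVec_transpose, transpose_transpose]
  have : (RCLike.ofReal ∘ hA.eigenvalues : Fin n → ℝ) = hA.eigenvalues := by ext i; simp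
  rw [this]
  simp only [dotProduct, mulVec_diagonal]
  exact Finset.sum_congr rfl fun i _ => by ring

lemma stmt18_row_sum {n k : ℕ} {G : SimpleGraph (Fin n)} [DecidableRel G.Adj]
    (hreg : G.IsRegularOfDegree k) (u : Fin n) :
    ∑ v, G.adjMatrix ℝ u v = (k : ℝ) := by
  have := SimpleGraph.adjMatrix_mulVec_const_apply_of_regular (α := ℝ) (a := 1) hreg (v := u)
  simpa [Matrix.mulVec, dotProduct] using this

lemma stmt18_perron {n k : ℕ} {G : SimpleGraph (Fin n)} [DecidableRel G.Adj]
    (hreg : G.IsRegularOfDegree k) (x : Fin n → ℝ) :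
    x ⬝ᵥ (G.adjMatrix ℝ *ᵥ x) ≤ (k : ℝ) * (x ⬝ᵥ x) := by
  set A := G.adjMatrix ℝ with hAdef
  have hsym : ∀ u v, A u v = A v u := fun u v => by
    simp [hAdef, SimpleGraph.adjMatrix_apply, G.adj_comm]
  have hnn : ∀ u v, 0 ≤ A u v := fun u v => by
    simp only [hAdef, SimpleGraph.adjMatrix_apply]; split <;> norm_num
  have col_sum : ∀ v, ∑ u, A u v = (k:ℝ) := by
    intro v
    rw [Finset.sum_congr rfl fun u _ => hsym u v]
    exact stmt18_row_sum hreg v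
  have e1 : ∀ u, ∑ v, A u v * (x u - x v)^2 =
      (k:ℝ) * x u^2 + (∑ v, A u v * x v^2) - 2 * (x u * ∑ v, A u v * x v) := by
    intro u
    have h : ∑ v, A u v * (x u - x v)^2 =
        ∑ v, (A u v * x u^2 + A u v * x v^2 - 2*(x u * (A u v * x v))) :=
      Finset.sum_congr rfl fun v _ => by ring
    rw [h, Finset.sum_sub_distrib, Finset.sum_add_distrib, ← Finset.sum_mul,
      stmt18_row_sum hreg, ← Finset.mul_sum, ← Finset.mul_sum]
  have key : ∑ u, ∑ v, A u v * (x u - x v)^2 =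
      2*(k:ℝ)*(x ⬝ᵥ x) - 2*(x ⬝ᵥ (A *ᵥ x)) := by
    rw [Finset.sum_congr rfl fun u _ => e1 u, Finset.sum_sub_distrib, Finset.sum_add_distrib]
    have h1 : ∑ u, (k:ℝ) * x u ^2 = (k:ℝ) * (x ⬝ᵥ x) := by
      rw [← Finset.mul_sum]; simp only [dotProduct]; congr 1
      exact Finset.sum_congr rfl fun u _ => by ring
    have h2 : ∑ u, ∑ v, A u v * x v^2 = (k:ℝ) * (x ⬝ᵥ x) := by
      rw [Finset.sum_comm]
      have hv : ∀ v, ∑ u, A u v * x v^2 = (k:ℝ) * x v^2 := by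
        intro v; rw [← Finset.sum_mul, col_sum]
      rw [Finset.sum_congr rfl fun v _ => hv v, ← Finset.mul_sum]
      simp only [dotProduct]; congr 1
      exact Finset.sum_congr rfl fun u _ => by ring
    have h3 : ∑ u, x u * ∑ v, A u v * x v = x ⬝ᵥ (A *ᵥ x) := by
      simp only [dotProduct, Matrix.mulVec, dotProduct]
    rw [h1, h2]
    have h4 : ∑ u, 2 * (x u * ∑ v, A u v * x v) = 2 * (x ⬝ᵥ (A *ᵥ x)) := by
      rw [← Finset.mul_sum, h3]
    rw [h4]; ring
  have hpos : 0 ≤ ∑ u, ∑ v, A u v * (x u - x v)^2 :=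
    Finset.sum_nonneg fun u _ => Finset.sum_nonneg fun v _ =>
      mul_nonneg (hnn u v) (sq_nonneg _)
  nlinarith [key, hpos]

end AuxStmt18

/-- Degree bound for dense regular graphs: if `G` is `k`-regular on `n ≥ 2` vertices with
adjacency eigenvalues `e 0 ≥ e 1 ≥ ... ≥ e (n-1)` (so `λ₂ = e 1`), and the spectral gap
satisfies `k − λ₂ < n/2`, then
`2(k − (k−λ₂)²/n) ≤ λ₂(λ₂+1)(2λ₂+1)/(1 − 2(k−λ₂)/n) − λ₂(3λ₂+1)`. -/
theorem stmt18 (n k : ℕ) (hn : 2 ≤ n) (G : SimpleGraph (Fin n)) [DecidableRel G.Adj]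
    (hreg : G.IsRegularOfDegree k)
    (hA : (G.adjMatrix ℝ).IsHermitian)
    (e : Fin n → ℝ) (σ : Equiv.Perm (Fin n))
    (he : ∀ i, e i = hA.eigenvalues (σ i)) (hmono : Antitone e)
    (hgap : (k : ℝ) - e ⟨1, by omega⟩ < n / 2) :
    2 * ((k : ℝ) - ((k : ℝ) - e ⟨1, by omega⟩) ^ 2 / n) ≤
      (e ⟨1, by omega⟩) * (e ⟨1, by omega⟩ + 1) * (2 * e ⟨1, by omega⟩ + 1)
          / (1 - 2 * ((k : ℝ) - e ⟨1, by omega⟩) / n)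
        - e ⟨1, by omega⟩ * (3 * e ⟨1, by omega⟩ + 1) := by
  have h1n : 1 < n := by omega
  set μ : ℝ := e ⟨1, by omega⟩ with hμdef
  set A := G.adjMatrix ℝ with hAdef
  set N : ℝ := (n : ℝ) with hNdef
  have hN : (0:ℝ) < N := by
    rw [hNdef]; exact_mod_cast (by omega : 0 < n)
  -- eigenvalue bound
  set M := (hA.eigenvectorUnitary : Matrix (Fin n) (Fin n) ℝ) with hM
  set ε := hA.eigenvalues with hε
  have hεk : ∀ j, ε j ≤ (k : ℝ) := by
    intro j
    set b := ⇑(hA.eigenvectorBasis j) with hb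
    have hcol : Mᵀ *ᵥ b = Pi.single j 1 := by
      rw [← stmt18_star_real_matrix]
      exact hA.star_eigenvectorUnitary_mulVec j
    have hxx : b ⬝ᵥ b = 1 := by
      rw [← stmt18_key1 hA b b, hcol]
      simp [dotProduct, Pi.single_apply]
    have hAx : b ⬝ᵥ (A *ᵥ b) = ε j := by
      rw [stmt18_key2 hA b, hcol]
      simp [Pi.single_apply, hε]
    have := stmt18_perron hreg b
    rw [hAx, hxx, mul_one] at this
    exact this
  have hμk : μ ≤ (k : ℝ) := by
    rw [hμdef, he]
    exact hεk _
  set g : ℝ := (k : ℝ) - μ with hg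
  have hg0 : 0 ≤ g := by rw [hg]; linarith
  -- the all-ones vector
  set o : Fin n → ℝ := fun _ => 1 with ho
  set d : Fin n → ℝ := Mᵀ *ᵥ o with hd
  have hAo : A *ᵥ o = fun _ => (k : ℝ) := by
    funext u
    have := SimpleGraph.adjMatrix_mulVec_const_apply_of_regular (α := ℝ) (a := 1) hreg (v := u)
    simpa [hAdef, ho] using this
  have hd2 : ∑ i, (d i)^2 = N := by
    have h := stmt18_key1 hA o o
    rw [← hd] at h
    have : o ⬝ᵥ o = N := by
      simp [ho, dotProduct, hNdef]
    rw [this] at h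
    rw [← h]
    simp [dotProduct, sq]
  have hεd : ∑ i, ε i * (d i)^2 = (k : ℝ) * N := by
    have h := stmt18_key2 hA o
    rw [← hd, ← hε] at h
    rw [← h, hAo]
    simp [ho, dotProduct, hNdef, mul_comm]
  have hzero : ∀ i, (d i)^2 * ((k:ℝ) - ε i) = 0 := by
    have hsum : ∑ i, (d i)^2 * ((k:ℝ) - ε i) = 0 := by
      have : ∑ i, (d i)^2 * ((k:ℝ) - ε i)
          = (k:ℝ) * (∑ i, (d i)^2) - ∑ i, ε i * (d i)^2 := by
        rw [Finset.mul_sum, ← Finset.sum_sub_distrib]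
        exact Finset.sum_congr rfl fun i _ => by ring
      rw [this, hd2, hεd]; ring
    intro i
    have hnn : ∀ i ∈ Finset.univ, 0 ≤ (d i)^2 * ((k:ℝ) - ε i) := fun i _ =>
      mul_nonneg (sq_nonneg _) (by linarith [hεk i])
    exact (Finset.sum_eq_zero_iff_of_nonneg hnn).mp hsum i (Finset.mem_univ i)
  -- the special index
  set j0 : Fin n := σ ⟨0, by omega⟩ with hj0
  have hother : ∀ i, i ≠ j0 → ε i ≤ μ := by
    intro i hi
    have h1 : σ.symm i ≠ ⟨0, by omega⟩ := by
      intro h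
      apply hi
      rw [hj0, ← h, Equiv.apply_symm_apply]
    have h2 : (⟨1, by omega⟩ : Fin n) ≤ σ.symm i := by
      rw [Fin.le_def]
      have : (σ.symm i : ℕ) ≠ 0 := by
        intro h
        exact h1 (Fin.ext h)
      simpa using Nat.one_le_iff_ne_zero.mpr this
    have h3 : e (σ.symm i) ≤ μ := hμdef ▸ hmono h2
    rwa [he, Equiv.apply_symm_apply] at h3
  -- main quadratic form bound
  have hform : ∀ x : Fin n → ℝ, x ⬝ᵥ (A *ᵥ x) ≤ μ * (x ⬝ᵥ x) + (g/N) * (∑ u, x u)^2 := by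
    intro x
    set c : Fin n → ℝ := Mᵀ *ᵥ x with hc
    have hxA : x ⬝ᵥ (A *ᵥ x) = ∑ i, ε i * (c i)^2 := stmt18_key2 hA x
    have hxx : x ⬝ᵥ x = ∑ i, (c i)^2 := by
      have h := stmt18_key1 hA x x
      rw [← h]
      simp [dotProduct, sq]
      rfl
    have hsx : ∑ u, x u = ∑ i, d i * c i := by
      have h := stmt18_key1 hA o x
      rw [← hd, ← hc] at h
      have h2 : o ⬝ᵥ x = ∑ u, x u := by simp [ho, dotProduct]
      have h3 : d ⬝ᵥ c = ∑ i, d i * c i := rfl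
      rw [← h2, ← h, h3]
    rw [hxA, hxx]
    by_cases hcase : ε j0 ≤ μ
    · have hall : ∀ i, ε i ≤ μ := by
        intro i
        by_cases h : i = j0
        · rw [h]; exact hcase
        · exact hother i h
      have h1 : ∑ i, ε i * (c i)^2 ≤ ∑ i, μ * (c i)^2 :=
        Finset.sum_le_sum fun i _ => mul_le_mul_of_nonneg_right (hall i) (sq_nonneg _)
      have h2 : 0 ≤ (g/N) * (∑ u, x u)^2 :=
        mul_nonneg (div_nonneg hg0 hN.le) (sq_nonneg _)
      rw [Finset.mul_sum]
      linarith
    · push_neg at hcase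
      have hdz : ∀ i, i ≠ j0 → d i = 0 := by
        intro i hi
        have h2 : ε i < (k:ℝ) := lt_of_le_of_lt (hother i hi) (lt_of_lt_of_le hcase (hεk j0))
        have h3 := hzero i
        have h4 : (d i)^2 = 0 := by
          rcases mul_eq_zero.mp h3 with h | h
          · exact h
          · linarith
        exact pow_eq_zero_iff (by norm_num) |>.mp h4
      have hdj2 : (d j0)^2 = N := by
        rw [← hd2]
        symm
        apply Finset.sum_eq_single_of_mem j0 (Finset.mem_univ _)
        intro i _ hi
        rw [hdz i hi]; ring
      have hεj0 : ε j0 = (k:ℝ) := by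
        have h1 : ∑ i, ε i * (d i)^2 = ε j0 * (d j0)^2 := by
          apply Finset.sum_eq_single_of_mem j0 (Finset.mem_univ _)
          intro i _ hi
          rw [hdz i hi]; ring
        rw [h1, hdj2] at hεd
        exact mul_right_cancel₀ hN.ne' hεd
      have hsd : ∑ i, d i * c i = d j0 * c j0 := by
        apply Finset.sum_eq_single_of_mem j0 (Finset.mem_univ _)
        intro i _ hi
        rw [hdz i hi]; ring
      have hgc : (g/N) * (∑ u, x u)^2 = g * (c j0)^2 := by
        rw [hsx, hsd, mul_pow, hdj2]
        field_simp
      rw [hgc]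
      have hpt : ∀ i, ε i * (c i)^2 ≤ μ * (c i)^2 + (if i = j0 then g * (c i)^2 else 0) := by
        intro i
        by_cases h : i = j0
        · subst h
          rw [if_pos rfl, hεj0]
          have : (k:ℝ) = μ + g := by rw [hg]; ring
          rw [this]; ring_nf
          exact le_refl _
        · rw [if_neg h]
          have := mul_le_mul_of_nonneg_right (hother i h) (sq_nonneg (c i))
          linarith
      calc ∑ i, ε i * (c i)^2
          ≤ ∑ i, (μ * (c i)^2 + (if i = j0 then g * (c i)^2 else 0)) :=
            Finset.sum_le_sum fun i _ => hpt i
        _ = μ * (∑ i, (c i)^2) + g * (c j0)^2 := by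
            rw [Finset.sum_add_distrib, ← Finset.mul_sum, Finset.sum_ite_eq' Finset.univ j0]
            simp
  -- the PSD matrix B
  set B : Matrix (Fin n) (Fin n) ℝ :=
    Matrix.of (fun u v => (if u = v then μ else 0) + g/N - A u v) with hB
  have hsymA : ∀ u v, A u v = A v u := fun u v => by
    simp [hAdef, SimpleGraph.adjMatrix_apply, G.adj_comm]
  have hBherm : B.IsHermitian := by
    rw [Matrix.IsHermitian]
    ext u v
    simp only [hB, conjTranspose_apply, Matrix.of_apply, star_trivial]
    rw [hsymA v u]
    by_cases h : u = v
    · subst h; rfl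
    · rw [if_neg h, if_neg (Ne.symm h)]
  have hBmulVec : ∀ (x : Fin n → ℝ) (u : Fin n),
      (B *ᵥ x) u = μ * x u + (g/N) * (∑ v, x v) - (A *ᵥ x) u := by
    intro x u
    have hBu : (B *ᵥ x) u = ∑ v, ((if u = v then μ else 0) + g/N - A u v) * x v := rfl
    have hcong : ∑ v, ((if u = v then μ else 0) + g/N - A u v) * x v
        = ∑ v, ((if u = v then μ * x v else 0) + (g/N) * x v - A u v * x v) :=
      Finset.sum_congr rfl fun v _ => by split <;> ring
    rw [hBu, hcong, Finset.sum_sub_distrib, Finset.sum_add_distrib,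
      Finset.sum_ite_eq Finset.univ u, ← Finset.mul_sum]
    simp only [Finset.mem_univ, if_pos]
    rfl
  have hBpsd : B.PosSemidef := by
    refine Matrix.PosSemidef.of_dotProduct_mulVec_nonneg hBherm fun x => ?_
    have hstar : star x = x := by
      funext u; simp
    rw [hstar]
    have hdot : x ⬝ᵥ (B *ᵥ x) = μ * (x ⬝ᵥ x) + (g/N) * (∑ u, x u)^2 - x ⬝ᵥ (A *ᵥ x) := by
      have hd1 : x ⬝ᵥ (B *ᵥ x) = ∑ u, x u * (B *ᵥ x) u := rfl
      have hcong : ∑ u, x u * (B *ᵥ x) u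
          = ∑ u, (μ * (x u * x u) + ((g/N) * (∑ v, x v)) * x u - x u * (A *ᵥ x) u) :=
        Finset.sum_congr rfl fun u _ => by rw [hBmulVec x u]; ring
      rw [hd1, hcong, Finset.sum_sub_distrib, Finset.sum_add_distrib, ← Finset.mul_sum,
        ← Finset.mul_sum]
      have h2 : x ⬝ᵥ (A *ᵥ x) = ∑ u, x u * (A *ᵥ x) u := rfl
      have h3 : x ⬝ᵥ x = ∑ u, x u * x u := rfl
      rw [← h2, ← h3]
      ring
    rw [hdot]
    have := hform x
    linarith
  -- factor B and get nonnegativity of the cube sum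
  obtain ⟨C, hC⟩ : ∃ C : Matrix (Fin n) (Fin n) ℝ, B = Cᴴ * C := by
    open scoped MatrixOrder in
    exact CStarAlgebra.nonneg_iff_eq_star_mul_self.mp (Matrix.nonneg_iff_posSemidef.mpr hBpsd)
  have hBentry : ∀ u v, B u v = ∑ t, C t u * C t v := by
    intro u v
    rw [hC]
    simp only [Matrix.mul_apply, conjTranspose_apply, star_trivial]
  have hScube : 0 ≤ ∑ u, ∑ v, (B u v)^3 := by
    set D : (Fin n × Fin n × Fin n) → Fin n → ℝ :=
      fun t u => C t.1 u * C t.2.1 u * C t.2.2 u with hD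
    have h1 : ∀ u v, (B u v)^3 = ∑ t : Fin n × Fin n × Fin n, D t u * D t v := by
      intro u v
      rw [hBentry u v, stmt18_sum_pow_three (fun t => C t u * C t v)]
      exact Finset.sum_congr rfl fun t _ => by simp only [hD]; ring
    have heq : ∑ u, ∑ v, (B u v)^3 = ∑ t : Fin n × Fin n × Fin n, (∑ u, D t u)^2 := by
      calc ∑ u, ∑ v, (B u v)^3
          = ∑ u, ∑ v, ∑ t : Fin n × Fin n × Fin n, D t u * D t v :=
            Finset.sum_congr rfl fun u _ => Finset.sum_congr rfl fun v _ => h1 u v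
        _ = ∑ u, ∑ t : Fin n × Fin n × Fin n, D t u * (∑ v, D t v) := by
            refine Finset.sum_congr rfl fun u _ => ?_
            rw [Finset.sum_comm]
            exact Finset.sum_congr rfl fun t _ => by rw [← Finset.mul_sum]
        _ = ∑ t : Fin n × Fin n × Fin n, ∑ u, D t u * (∑ v, D t v) := Finset.sum_comm
        _ = ∑ t : Fin n × Fin n × Fin n, (∑ u, D t u)^2 := by
            refine Finset.sum_congr rfl fun t _ => ?_
            rw [← Finset.sum_mul, sq]
    rw [heq]
    exact Finset.sum_nonneg fun t _ => sq_nonneg _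
  -- compute the entry sum
  have hentry : ∀ u v, (B u v)^3 = (g/N)^3 + A u v * ((g/N - 1)^3 - (g/N)^3)
      + (if u = v then ((μ + g/N)^3 - (g/N)^3) else 0) := by
    intro u v
    have hBuv : B u v = (if u = v then μ else 0) + g/N - A u v := rfl
    by_cases h : u = v
    · subst h
      have hAuu : A u u = 0 := by simp [hAdef]
      rw [hBuv, hAuu, if_pos rfl, if_pos rfl]; ring
    · have hAv : A u v = 0 ∨ A u v = 1 := by
        by_cases hadj : G.Adj u v
        · right; simp [hAdef, hadj]
        · left; simp [hAdef, hadj]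
      rw [hBuv, if_neg h, if_neg h]
      rcases hAv with h0 | h0 <;> rw [h0] <;> ring
  have hcard : ∀ c : ℝ, ∑ _v : Fin n, c = N * c := by
    intro c
    rw [Finset.sum_const, Finset.card_univ, Fintype.card_fin, nsmul_eq_mul, hNdef]
  have hSval : ∑ u, ∑ v, (B u v)^3
      = N * (N * (g/N)^3 + (k:ℝ) * ((g/N - 1)^3 - (g/N)^3) + ((μ + g/N)^3 - (g/N)^3)) := by
    have hrow : ∀ u, ∑ v, A u v = (k:ℝ) := fun u => stmt18_row_sum hreg u
    have hperu : ∀ u, ∑ v, (B u v)^3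
        = N * (g/N)^3 + (k:ℝ) * ((g/N - 1)^3 - (g/N)^3) + ((μ + g/N)^3 - (g/N)^3) := by
      intro u
      rw [Finset.sum_congr rfl fun v (_ : v ∈ Finset.univ) => hentry u v]
      rw [Finset.sum_add_distrib, Finset.sum_add_distrib, Finset.sum_ite_eq Finset.univ u,
        ← Finset.sum_mul, hrow u, hcard]
      simp only [Finset.mem_univ, if_pos]
    rw [Finset.sum_congr rfl fun u (_ : u ∈ Finset.univ) => hperu u, hcard]
  rw [hSval] at hScube
  -- final algebra
  have hD : 0 < 1 - 2*g/N := by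
    have h2g : 2*g < N := by
      have : g < N/2 := hgap
      linarith
    have : 2*g/N < 1 := (div_lt_one hN).mpr h2g
    linarith
  rw [le_sub_iff_add_le, le_div_iff₀ hD]
  have key : μ * (μ + 1) * (2 * μ + 1)
      - (2 * ((k:ℝ) - g^2/N) + μ * (3 * μ + 1)) * (1 - 2*g/N)
      = (2/N) * (N * (N * (g/N)^3 + (k:ℝ) * ((g/N - 1)^3 - (g/N)^3)
          + ((μ + g/N)^3 - (g/N)^3))) := by
    field_simp
    ring
  nlinarith [hScube, key, hN, mul_nonneg (by positivity : (0:ℝ) ≤ 2/N) hScube]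
end

section
/- Let 0 < α < 1 and let M be the Gram matrix of a spherical {α, −α}-code of size n in R^r. Suppose the all-ones vector 1 is an eigenvector of M with eigenvalue λ ≠ 0. Then: (a) λ^2 ≥ n(α^2 n + 1 − α^2) − ((1−α^2)/2)·n·(n/λ − 1), and (b) any eigenvalue μ of M corresponding to an eigenvector orthogonal to 1 satisfies μ ≤ (1−α^2)n/(2λ). -/
open Matrix

private lemma hswap {n r : ℕ} (p : Fin n → Fin r → ℝ) (q : Fin r → ℝ) :
    ∑ a, (∑ i, p i a) * q a = ∑ i, ∑ a, p i a * q a := by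
  calc ∑ a, (∑ i, p i a) * q a = ∑ a, ∑ i, p i a * q a :=
        Finset.sum_congr rfl fun a _ => Finset.sum_mul _ _ _
    _ = ∑ i, ∑ a, p i a * q a := Finset.sum_comm

private lemma prod_split {r : ℕ} (f g : Fin r → ℝ) :
    ∑ a, ∑ b, f a * g b = (∑ a, f a) * (∑ b, g b) :=
  (Finset.sum_mul_sum _ _ _ _).symm

private lemma swap3 {n r : ℕ} (F : Fin n → Fin r → Fin r → ℝ) :
    ∑ a, ∑ b, ∑ i, F i a b = ∑ i, ∑ a, ∑ b, F i a b := by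
  calc ∑ a, ∑ b, ∑ i, F i a b = ∑ a, ∑ i, ∑ b, F i a b :=
        Finset.sum_congr rfl fun a _ => Finset.sum_comm
    _ = ∑ i, ∑ a, ∑ b, F i a b := Finset.sum_comm

private lemma swap4 {n r : ℕ} (F : Fin n → Fin n → Fin r → Fin r → ℝ) :
    ∑ a, ∑ b, ∑ i, ∑ j, F i j a b = ∑ i, ∑ j, ∑ a, ∑ b, F i j a b := by
  calc ∑ a, ∑ b, ∑ i, ∑ j, F i j a b
      = ∑ a, ∑ i, ∑ b, ∑ j, F i j a b :=
        Finset.sum_congr rfl fun a _ => Finset.sum_comm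
    _ = ∑ i, ∑ a, ∑ b, ∑ j, F i j a b := Finset.sum_comm
    _ = ∑ i, ∑ a, ∑ j, ∑ b, F i j a b :=
        Finset.sum_congr rfl fun i _ => Finset.sum_congr rfl fun a _ => Finset.sum_comm
    _ = ∑ i, ∑ j, ∑ a, ∑ b, F i j a b :=
        Finset.sum_congr rfl fun i _ => Finset.sum_comm

private lemma sum_sq_expand {n r : ℕ} (V : Fin n → Fin r → ℝ) (z : Fin n → ℝ) :
    ∑ a, (∑ i, z i * V i a) ^ 2 = ∑ i, ∑ j, z i * z j * (∑ a, V i a * V j a) := by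
  calc ∑ a, (∑ i, z i * V i a) ^ 2
      = ∑ a, (∑ i, z i * V i a) * (∑ j, z j * V j a) := by
        refine Finset.sum_congr rfl fun a _ => ?_; ring
    _ = ∑ i, ∑ a, (z i * V i a) * (∑ j, z j * V j a) := hswap _ _
    _ = ∑ i, ∑ a, ∑ j, (z i * V i a) * (z j * V j a) := by
        refine Finset.sum_congr rfl fun i _ => Finset.sum_congr rfl fun a _ => ?_
        rw [Finset.mul_sum]
    _ = ∑ i, ∑ j, ∑ a, (z i * V i a) * (z j * V j a) :=
        Finset.sum_congr rfl fun i _ => Finset.sum_comm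
    _ = ∑ i, ∑ j, z i * z j * (∑ a, V i a * V j a) := by
        refine Finset.sum_congr rfl fun i _ => Finset.sum_congr rfl fun j _ => ?_
        rw [Finset.mul_sum]
        refine Finset.sum_congr rfl fun a _ => ?_; ring

private lemma offdiag_sum {n : ℕ} (t : Fin n → Fin n → ℝ) (z : Fin n → ℝ) (c : ℝ)
    (h : ∀ i j, i ≠ j → t i j = c * (z i * z j)) :
    ∑ i, ∑ j, t i j = c * ((∑ i, z i) * (∑ i, z i)) + ∑ i, (t i i - c * (z i * z i)) := by
  have h2 : ∀ i j : Fin n, t i j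
      = c * (z i * z j) + (if i = j then t j j - c * (z j * z j) else 0) := by
    intro i j
    by_cases hij : i = j
    · subst hij; simp
    · simp [hij, h i j hij]
  calc ∑ i, ∑ j, t i j
      = ∑ i, ∑ j, (c * (z i * z j) + (if i = j then t j j - c * (z j * z j) else 0)) :=
        Finset.sum_congr rfl fun i _ => Finset.sum_congr rfl fun j _ => h2 i j
    _ = ∑ i, ((∑ j, c * (z i * z j)) + (t i i - c * (z i * z i))) := by
        refine Finset.sum_congr rfl fun i _ => ?_
        rw [Finset.sum_add_distrib, Finset.sum_ite_eq]
        simp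
    _ = (∑ i, ∑ j, c * (z i * z j)) + ∑ i, (t i i - c * (z i * z i)) :=
        Finset.sum_add_distrib
    _ = _ := by
        congr 1
        calc ∑ i, ∑ j, c * (z i * z j) = ∑ i, ∑ j, (c * z i) * z j := by
              refine Finset.sum_congr rfl fun i _ => Finset.sum_congr rfl fun j _ => ?_; ring
          _ = (∑ i, c * z i) * (∑ j, z j) := prod_split _ _
          _ = c * ((∑ i, z i) * (∑ i, z i)) := by rw [← Finset.mul_sum]; ring

/-- The key inequality: for `z` summing to zero,
`2·lam·‖∑ zᵢ vᵢ‖² ≤ (1-α²)·n·‖z‖²`. -/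
private lemma key_ineq {n r : ℕ} (V : Fin n → Fin r → ℝ) (α lam : ℝ)
    (hα2 : α ^ 2 ≤ 1) (hlam : 0 < lam)
    (hdii : ∀ i, (∑ a, V i a * V i a) = 1)
    (hdsq : ∀ i j, i ≠ j → (∑ a, V i a * V j a) ^ 2 = α ^ 2)
    (hrow : ∀ i, (∑ j, ∑ a, V i a * V j a) = lam)
    (z : Fin n → ℝ) (hz : (∑ i, z i) = 0) :
    2 * lam * (∑ a, (∑ i, z i * V i a) ^ 2) ≤ (1 - α ^ 2) * n * (∑ i, z i ^ 2) := by
  set u : Fin r → ℝ := fun a => ∑ i, V i a with hu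
  set w : Fin r → ℝ := fun a => ∑ i, z i * V i a with hw
  set d : Fin n → Fin n → ℝ := fun i j => ∑ a, V i a * V j a with hd
  set cc : Fin n → ℝ := fun i => ∑ j, z j * d i j with hcc
  have hua : ∀ a, u a = ∑ i, V i a := fun a => rfl
  have hwa : ∀ a, w a = ∑ i, z i * V i a := fun a => rfl
  have hdij : ∀ i j, d i j = ∑ a, V i a * V j a := fun i j => rfl
  -- (1) ⟨vᵢ, u⟩ = lam
  have hvu : ∀ i, ∑ a, V i a * u a = lam := by
    intro i
    calc ∑ a, V i a * u a = ∑ a, (∑ j, V j a) * V i a := by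
          refine Finset.sum_congr rfl fun a _ => ?_; rw [hua]; ring
      _ = ∑ j, ∑ a, V j a * V i a := hswap _ _
      _ = ∑ j, ∑ a, V i a * V j a := by
          refine Finset.sum_congr rfl fun j _ => Finset.sum_congr rfl fun a _ => ?_; ring
      _ = lam := hrow i
  -- (2) ⟨vᵢ, w⟩ = cc i
  have hvw : ∀ i, ∑ a, V i a * w a = cc i := by
    intro i
    calc ∑ a, V i a * w a = ∑ a, (∑ j, z j * V j a) * V i a := by
          refine Finset.sum_congr rfl fun a _ => ?_; rw [hwa]; ring
      _ = ∑ j, ∑ a, (z j * V j a) * V i a := hswap _ _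
      _ = ∑ j, z j * d i j := by
          refine Finset.sum_congr rfl fun j _ => ?_
          rw [hdij, Finset.mul_sum]
          refine Finset.sum_congr rfl fun a _ => ?_; ring
  -- (3) ‖u‖² = n·lam
  have huu : ∑ a, u a * u a = (n : ℝ) * lam := by
    calc ∑ a, u a * u a = ∑ a, (∑ i, V i a) * u a := by
          refine Finset.sum_congr rfl fun a _ => ?_; rw [hua]
      _ = ∑ i, ∑ a, V i a * u a := hswap _ _
      _ = ∑ i, lam := Finset.sum_congr rfl fun i _ => hvu i
      _ = (n : ℝ) * lam := by simp [Finset.sum_const, nsmul_eq_mul]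
  -- (4) ⟨u, w⟩ = 0
  have huw : ∑ a, u a * w a = 0 := by
    calc ∑ a, u a * w a = ∑ a, (∑ i, z i * V i a) * u a := by
          refine Finset.sum_congr rfl fun a _ => ?_; rw [hwa]; ring
      _ = ∑ i, ∑ a, (z i * V i a) * u a := hswap _ _
      _ = ∑ i, z i * lam := by
          refine Finset.sum_congr rfl fun i _ => ?_
          rw [← hvu i, Finset.mul_sum]
          refine Finset.sum_congr rfl fun a _ => ?_; ring
      _ = (∑ i, z i) * lam := by rw [Finset.sum_mul]
      _ = 0 := by rw [hz]; ring
  -- (5) ‖w‖² = ∑ zᵢ · cc i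
  have hww : ∑ a, w a * w a = ∑ i, z i * cc i := by
    calc ∑ a, w a * w a = ∑ a, (∑ i, z i * V i a) * w a := by
          refine Finset.sum_congr rfl fun a _ => ?_; rw [hwa]
      _ = ∑ i, ∑ a, (z i * V i a) * w a := hswap _ _
      _ = ∑ i, z i * cc i := by
          refine Finset.sum_congr rfl fun i _ => ?_
          rw [← hvw i, Finset.mul_sum]
          refine Finset.sum_congr rfl fun a _ => ?_; ring
  set W2 : ℝ := ∑ a, w a * w a with hW2
  -- Cauchy-Schwarz for f = ∑ zᵢ vᵢvᵢᵀ and g = uwᵀ + wuᵀ (Frobenius)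
  have hCS := Finset.sum_mul_sq_le_sq_mul_sq Finset.univ
    (fun p : Fin r × Fin r => ∑ i, z i * (V i p.1 * V i p.2))
    (fun p : Fin r × Fin r => u p.1 * w p.2 + w p.1 * u p.2)
  rw [Fintype.sum_prod_type, Fintype.sum_prod_type, Fintype.sum_prod_type] at hCS
  simp only [] at hCS
  -- the three sums
  have hF2 : (∑ a, ∑ b, (∑ i, z i * (V i a * V i b)) ^ 2)
      = (1 - α ^ 2) * (∑ i, z i ^ 2) := by
    have step1 : (∑ a, ∑ b, (∑ i, z i * (V i a * V i b)) ^ 2)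
        = ∑ i, ∑ j, (z i * z j) * (d i j * d i j) := by
      calc (∑ a, ∑ b, (∑ i, z i * (V i a * V i b)) ^ 2)
          = ∑ a, ∑ b, ∑ i, ∑ j, (z i * (V i a * V i b)) * (z j * (V j a * V j b)) := by
            refine Finset.sum_congr rfl fun a _ => Finset.sum_congr rfl fun b _ => ?_
            rw [sq, Finset.sum_mul_sum]
        _ = ∑ i, ∑ j, ∑ a, ∑ b, (z i * (V i a * V i b)) * (z j * (V j a * V j b)) :=
            swap4 _
        _ = ∑ i, ∑ j, (z i * z j) * (d i j * d i j) := by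
            refine Finset.sum_congr rfl fun i _ => Finset.sum_congr rfl fun j _ => ?_
            calc ∑ a, ∑ b, (z i * (V i a * V i b)) * (z j * (V j a * V j b))
                = ∑ a, ∑ b, ((z i * z j) * (V i a * V j a)) * (V i b * V j b) := by
                  refine Finset.sum_congr rfl fun a _ => Finset.sum_congr rfl fun b _ => ?_
                  ring
              _ = (∑ a, (z i * z j) * (V i a * V j a)) * (∑ b, V i b * V j b) :=
                  prod_split _ _
              _ = (z i * z j) * (d i j * d i j) := by
                  rw [hdij, ← Finset.mul_sum]; ring
    rw [step1, offdiag_sum _ z (α ^ 2)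
      (fun i j hij => by
        have h1 : d i j * d i j = α ^ 2 := by rw [← sq]; exact hdsq i j hij
        rw [h1]; ring)]
    rw [hz]
    have h3 : (∑ i, (z i * z i * (d i i * d i i) - α ^ 2 * (z i * z i)))
        = ∑ i, (1 - α ^ 2) * z i ^ 2 := by
      refine Finset.sum_congr rfl fun i _ => ?_
      have : d i i = 1 := hdii i
      rw [this]; ring
    rw [h3, ← Finset.mul_sum]; ring
  have hFG : (∑ a, ∑ b, (∑ i, z i * (V i a * V i b)) * (u a * w b + w a * u b))
      = 2 * lam * W2 := by
    calc (∑ a, ∑ b, (∑ i, z i * (V i a * V i b)) * (u a * w b + w a * u b))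
        = ∑ a, ∑ b, ∑ i, ((z i * (V i a * u a)) * (V i b * w b)
            + (z i * (V i a * w a)) * (V i b * u b)) := by
          refine Finset.sum_congr rfl fun a _ => Finset.sum_congr rfl fun b _ => ?_
          rw [Finset.sum_mul]
          refine Finset.sum_congr rfl fun i _ => ?_; ring
      _ = ∑ i, ∑ a, ∑ b, ((z i * (V i a * u a)) * (V i b * w b)
            + (z i * (V i a * w a)) * (V i b * u b)) := swap3 _
      _ = ∑ i, z i * (2 * lam * cc i) := by
          refine Finset.sum_congr rfl fun i _ => ?_
          have hsplit : (∑ a, ∑ b, ((z i * (V i a * u a)) * (V i b * w b)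
                + (z i * (V i a * w a)) * (V i b * u b)))
              = (∑ a, ∑ b, (z i * (V i a * u a)) * (V i b * w b))
                + (∑ a, ∑ b, (z i * (V i a * w a)) * (V i b * u b)) := by
            simp only [Finset.sum_add_distrib]
          rw [hsplit, prod_split, prod_split]
          have e3 : ∑ a, z i * (V i a * u a) = z i * lam := by
            rw [← hvu i, Finset.mul_sum]
          have e4 : ∑ a, z i * (V i a * w a) = z i * cc i := by
            rw [← hvw i, Finset.mul_sum]
          rw [e3, e4, hvw i, hvu i]; ring
      _ = 2 * lam * W2 := by
          rw [show (2 : ℝ) * lam * W2 = 2 * lam * ∑ i, z i * cc i from by rw [hww],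
            Finset.mul_sum]
          refine Finset.sum_congr rfl fun i _ => ?_; ring
  have hG2 : (∑ a, ∑ b, (u a * w b + w a * u b) ^ 2) = 2 * ((n : ℝ) * lam) * W2 := by
    calc (∑ a, ∑ b, (u a * w b + w a * u b) ^ 2)
        = ∑ a, ∑ b, ((u a * u a) * (w b * w b) + ((w a * w a) * (u b * u b)
            + (2 * (u a * w a)) * (u b * w b))) := by
          refine Finset.sum_congr rfl fun a _ => Finset.sum_congr rfl fun b _ => ?_; ring
      _ = (∑ a, ∑ b, (u a * u a) * (w b * w b)) + ((∑ a, ∑ b, (w a * w a) * (u b * u b))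
            + (∑ a, ∑ b, (2 * (u a * w a)) * (u b * w b))) := by
          simp only [Finset.sum_add_distrib]
      _ = (∑ a, u a * u a) * (∑ b, w b * w b) + ((∑ a, w a * w a) * (∑ b, u b * u b)
            + (∑ a, 2 * (u a * w a)) * (∑ b, u b * w b)) := by
          rw [prod_split, prod_split, prod_split]
      _ = 2 * ((n : ℝ) * lam) * W2 := by
          have e5 : ∑ a, 2 * (u a * w a) = 2 * ∑ a, u a * w a := by
            rw [Finset.mul_sum]
          rw [e5, huw, huu, ← hW2]; ring
  rw [hF2, hFG, hG2] at hCS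
  have hgoalW : (∑ a, (∑ i, z i * V i a) ^ 2) = W2 := by
    rw [hW2]
    refine Finset.sum_congr rfl fun a _ => ?_
    rw [hwa]; ring
  rw [hgoalW]
  have hSnn : 0 ≤ ∑ i, z i ^ 2 := Finset.sum_nonneg fun i _ => sq_nonneg _
  have hW2nn : 0 ≤ W2 := by
    rw [hW2]; exact Finset.sum_nonneg fun a _ => mul_self_nonneg _
  rcases hW2nn.eq_or_lt with h0 | hpos
  · rw [← h0]
    have hnn : (0:ℝ) ≤ (1 - α ^ 2) * n * (∑ i, z i ^ 2) :=
      mul_nonneg (mul_nonneg (by linarith) (Nat.cast_nonneg n)) hSnn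
    linarith
  · nlinarith [hCS, mul_pos hlam hpos, hSnn, hpos, hlam]

/-- For the Gram matrix `M` of a spherical `{α, −α}`-code of size `n` in `ℝ^r` with the
all-ones vector an eigenvector of eigenvalue `lam ≠ 0`:
(a) `lam² ≥ n(α²n + 1 − α²) − ((1−α²)/2)·n·(n/lam − 1)`, and
(b) any eigenvalue `μ` with eigenvector orthogonal to the all-ones vector satisfies
`μ ≤ (1−α²)n/(2 lam)`. -/
theorem stmt19 (r n : ℕ) (α : ℝ) (hα0 : 0 < α) (hα1 : α < 1)
    (v : Fin n → EuclideanSpace ℝ (Fin r)) (hv : ∀ i, ‖v i‖ = 1)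
    (hangle : ∀ i j, i ≠ j → |(inner ℝ (v i) (v j) : ℝ)| = α)
    (M : Matrix (Fin n) (Fin n) ℝ) (hM : ∀ i j, M i j = inner ℝ (v i) (v j))
    (lam : ℝ) (hlam : lam ≠ 0)
    (hones : M.mulVec (fun _ => 1) = lam • (fun _ => (1 : ℝ))) :
    lam ^ 2 ≥ n * (α ^ 2 * n + 1 - α ^ 2) - (1 - α ^ 2) / 2 * n * (n / lam - 1) ∧
    ∀ (mu : ℝ) (x : Fin n → ℝ), x ≠ 0 → x ⬝ᵥ (fun _ => (1 : ℝ)) = 0 →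
      M.mulVec x = mu • x → mu ≤ (1 - α ^ 2) * n / (2 * lam) := by
  have hinner : ∀ i j, (inner ℝ (v i) (v j) : ℝ) = ∑ a, v i a * v j a := by
    intro i j
    simp [PiLp.inner_apply, RCLike.inner_apply, mul_comm]
  set V : Fin n → Fin r → ℝ := fun i a => v i a with hV
  have hdii : ∀ i, (∑ a, V i a * V i a) = 1 := by
    intro i
    have h1 := real_inner_self_eq_norm_sq (v i)
    rw [hinner i i, hv i] at h1
    simpa using h1
  have hdsq : ∀ i j, i ≠ j → (∑ a, V i a * V j a) ^ 2 = α ^ 2 := by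
    intro i j hij
    have h1 := hangle i j hij
    rw [hinner i j] at h1
    calc (∑ a, V i a * V j a) ^ 2 = |∑ a, v i a * v j a| ^ 2 := (sq_abs _).symm
      _ = α ^ 2 := by rw [h1]
  have hMd : ∀ i j, M i j = ∑ a, V i a * V j a := fun i j => by
    rw [hM i j, hinner i j]
  have hrowM : ∀ i, ∑ j, M i j = lam := by
    intro i
    have h1 := congrFun hones i
    simpa [Matrix.mulVec, dotProduct] using h1
  have hrow : ∀ i, (∑ j, ∑ a, V i a * V j a) = lam := by
    intro i
    rw [← hrowM i]
    exact Finset.sum_congr rfl fun j _ => (hMd i j).symm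
  by_cases hn : n = 0
  · subst hn
    constructor
    · norm_num
      nlinarith [sq_nonneg lam]
    · intro mu x hx _ _
      exact absurd (Subsingleton.elim x 0) hx
  have hn0 : (0:ℝ) < n := Nat.cast_pos.mpr (Nat.pos_of_ne_zero hn)
  have hnne : (n:ℝ) ≠ 0 := ne_of_gt hn0
  have hnl : ∑ a, (∑ i, (1:ℝ) * V i a) ^ 2 = (n:ℝ) * lam := by
    rw [sum_sq_expand]
    calc ∑ i, ∑ j, (1:ℝ) * 1 * (∑ a, V i a * V j a)
        = ∑ i, ∑ j, (∑ a, V i a * V j a) := by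
          refine Finset.sum_congr rfl fun i _ => Finset.sum_congr rfl fun j _ => ?_; ring
      _ = ∑ i, lam := Finset.sum_congr rfl fun i _ => hrow i
      _ = (n:ℝ) * lam := by simp [Finset.sum_const, nsmul_eq_mul]
  have hlampos : 0 < lam := by
    have h1 : 0 ≤ (n:ℝ) * lam := by
      rw [← hnl]; exact Finset.sum_nonneg fun a _ => sq_nonneg _
    rcases lt_trichotomy lam 0 with h | h | h
    · exfalso; nlinarith
    · exact absurd h hlam
    · exact h
  have hα2 : α ^ 2 ≤ 1 := by nlinarith
  have KEY := key_ineq V α lam hα2 hlampos hdii hdsq hrow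
  constructor
  · -- part (a)
    set dd : Fin n → Fin n → ℝ := fun i j => ∑ a, V i a * V j a with hdd
    have hddij : ∀ i j, dd i j = ∑ a, V i a * V j a := fun i j => rfl
    have hrowd : ∀ i, ∑ j, dd i j = lam := fun i => hrow i
    have hdiid : ∀ i, dd i i = 1 := fun i => hdii i
    set u : Fin r → ℝ := fun a => ∑ i, V i a with hu
    have hua : ∀ a, u a = ∑ i, V i a := fun a => rfl
    have hvu : ∀ i, ∑ a, V i a * u a = lam := by
      intro i
      calc ∑ a, V i a * u a = ∑ a, (∑ j, V j a) * V i a := by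
            refine Finset.sum_congr rfl fun a _ => ?_; rw [hua]; ring
        _ = ∑ j, ∑ a, V j a * V i a := hswap _ _
        _ = ∑ j, ∑ a, V i a * V j a := by
            refine Finset.sum_congr rfl fun j _ => Finset.sum_congr rfl fun a _ => ?_; ring
        _ = lam := hrow i
    have huu : ∑ a, u a * u a = (n : ℝ) * lam := by
      calc ∑ a, u a * u a = ∑ a, (∑ i, V i a) * u a := by
            refine Finset.sum_congr rfl fun a _ => ?_; rw [hua]
        _ = ∑ i, ∑ a, V i a * u a := hswap _ _
        _ = ∑ i, lam := Finset.sum_congr rfl fun i _ => hvu i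
        _ = (n : ℝ) * lam := by simp [Finset.sum_const, nsmul_eq_mul]
    set wv : Fin n → Fin r → ℝ := fun i a => V i a - u a / n with hwv
    have hwva : ∀ i a, wv i a = V i a - u a / n := fun i a => rfl
    have hwvw : ∀ i j, ∑ a, wv i a * wv j a = dd i j - lam / n := by
      intro i j
      have expand : ∀ a, wv i a * wv j a
          = V i a * V j a - (V i a * u a) / n - (V j a * u a) / n + (u a * u a) / (n * n) := by
        intro a; rw [hwva, hwva]; ring
      calc ∑ a, wv i a * wv j a
          = ∑ a, (V i a * V j a - (V i a * u a) / n - (V j a * u a) / n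
              + (u a * u a) / (n * n)) := Finset.sum_congr rfl fun a _ => expand a
        _ = (∑ a, V i a * V j a) - (∑ a, V i a * u a) / n - (∑ a, V j a * u a) / n
            + (∑ a, u a * u a) / (n * n) := by
            rw [Finset.sum_add_distrib, Finset.sum_sub_distrib, Finset.sum_sub_distrib,
              ← Finset.sum_div, ← Finset.sum_div, ← Finset.sum_div]
        _ = dd i j - lam / n := by
            rw [hvu i, hvu j, huu, ← hddij]
            field_simp
            ring
    have hrowz : ∀ i, ∑ j, (dd i j - lam / n) = 0 := by
      intro i
      rw [Finset.sum_sub_distrib, hrowd i]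
      have h2 : ∑ _j : Fin n, lam / n = (n:ℝ) * (lam / n) := by
        simp [Finset.sum_const, nsmul_eq_mul]
      rw [h2]
      field_simp
      ring
    have h2l : (0:ℝ) < 2 * lam := by linarith
    -- per-row inequality
    have hperrow : ∀ i, 2 * lam * (∑ j, (dd i j - lam / n) ^ 2)
        ≤ (1 - α ^ 2) * n * (dd i i - lam / n) := by
      intro i
      have hKi := KEY (fun j => dd i j - lam / n) (hrowz i)
      have hwvV : ∀ j, ∑ a, wv i a * V j a = dd i j - lam / n := by
        intro j
        have expand : ∀ a, wv i a * V j a = V i a * V j a - (V j a * u a) / n := by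
          intro a; rw [hwva]; ring
        calc ∑ a, wv i a * V j a
            = ∑ a, (V i a * V j a - (V j a * u a) / n) :=
              Finset.sum_congr rfl fun a _ => expand a
          _ = (∑ a, V i a * V j a) - (∑ a, V j a * u a) / n := by
              rw [Finset.sum_sub_distrib, ← Finset.sum_div]
          _ = dd i j - lam / n := by rw [hvu j, ← hddij]
      have hstep2 : ∑ a, wv i a * (∑ j, (dd i j - lam / n) * V j a)
          = ∑ j, (dd i j - lam / n) ^ 2 := by
        calc ∑ a, wv i a * (∑ j, (dd i j - lam / n) * V j a)
            = ∑ a, (∑ j, (dd i j - lam / n) * V j a) * wv i a := by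
              refine Finset.sum_congr rfl fun a _ => ?_; ring
          _ = ∑ j, ∑ a, ((dd i j - lam / n) * V j a) * wv i a := hswap _ _
          _ = ∑ j, (dd i j - lam / n) ^ 2 := by
              refine Finset.sum_congr rfl fun j _ => ?_
              calc ∑ a, ((dd i j - lam / n) * V j a) * wv i a
                  = ∑ a, (dd i j - lam / n) * (wv i a * V j a) := by
                    refine Finset.sum_congr rfl fun a _ => ?_; ring
                _ = (dd i j - lam / n) * ∑ a, wv i a * V j a := by
                    rw [Finset.mul_sum]
                _ = (dd i j - lam / n) ^ 2 := by rw [hwvV j]; ring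
      have hCSi := Finset.sum_mul_sq_le_sq_mul_sq Finset.univ
        (fun a => wv i a) (fun a => ∑ j, (dd i j - lam / n) * V j a)
      rw [hstep2] at hCSi
      have hNii : ∑ a, wv i a ^ 2 = dd i i - lam / n := by
        rw [← hwvw i i]
        refine Finset.sum_congr rfl fun a _ => sq (wv i a)
      rw [hNii] at hCSi
      have hqnn : 0 ≤ ∑ j, (dd i j - lam / n) ^ 2 :=
        Finset.sum_nonneg fun j _ => sq_nonneg _
      have hNnn : 0 ≤ dd i i - lam / n := by
        rw [← hNii]
        exact Finset.sum_nonneg fun a _ => sq_nonneg _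
      rcases hqnn.eq_or_lt with h0 | hqpos
      · rw [← h0]
        have hfin : (0:ℝ) ≤ (1 - α ^ 2) * n * (dd i i - lam / n) :=
          mul_nonneg (mul_nonneg (by linarith) hn0.le) hNnn
        linarith
      · nlinarith [mul_le_mul_of_nonneg_left hKi hNnn,
          mul_le_mul_of_nonneg_left hCSi h2l.le, hqpos]
    have hdiag : ∑ i, (dd i i - lam / n) = (n:ℝ) - lam := by
      rw [Finset.sum_sub_distrib]
      have h1 : ∑ i, dd i i = (n:ℝ) := by
        rw [Finset.sum_congr rfl (fun i _ => hdiid i)]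
        simp
      have h2 : ∑ _i : Fin n, lam / n = (n:ℝ) * (lam / n) := by
        simp [Finset.sum_const, nsmul_eq_mul]
      rw [h1, h2]
      field_simp
    have hDD : ∑ i, ∑ j, (dd i j) ^ 2 = α ^ 2 * ((n:ℝ) * n) + (n:ℝ) * (1 - α ^ 2) := by
      have hoff := offdiag_sum (fun i j => dd i j ^ 2) (fun _ => (1:ℝ)) (α ^ 2)
        (fun i j hij => by
          show dd i j ^ 2 = α ^ 2 * ((1:ℝ) * 1)
          rw [hddij i j, hdsq i j hij]; ring)
      rw [hoff]
      have h1 : ∑ _i : Fin n, (1:ℝ) = (n:ℝ) := by simp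
      have h2 : ∑ i, (dd i i ^ 2 - α ^ 2 * ((1:ℝ) * 1)) = ∑ _i : Fin n, (1 - α ^ 2) := by
        refine Finset.sum_congr rfl fun i _ => ?_
        rw [hdiid i]; ring
      rw [h1, h2]
      simp [Finset.sum_const, nsmul_eq_mul]
      ring
    have hDsum : ∑ i, ∑ j, dd i j = (n:ℝ) * lam := by
      calc ∑ i, ∑ j, dd i j = ∑ i, lam := Finset.sum_congr rfl fun i _ => hrowd i
        _ = (n:ℝ) * lam := by simp [Finset.sum_const, nsmul_eq_mul]
    have hD : ∑ i, ∑ j, (dd i j - lam / n) ^ 2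
        = (α ^ 2 * ((n:ℝ) * n) + (n:ℝ) * (1 - α ^ 2)) - lam ^ 2 := by
      have point : ∀ i j, (dd i j - lam / n) ^ 2
          = dd i j ^ 2 - (2 * (lam / n)) * dd i j + (lam / n) ^ 2 := fun i j => by ring
      calc ∑ i, ∑ j, (dd i j - lam / n) ^ 2
          = ∑ i, ∑ j, (dd i j ^ 2 - (2 * (lam / n)) * dd i j + (lam / n) ^ 2) :=
            Finset.sum_congr rfl fun i _ => Finset.sum_congr rfl fun j _ => point i j
        _ = ∑ i, ((∑ j, dd i j ^ 2) - (2 * (lam / n)) * (∑ j, dd i j)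
              + (n:ℝ) * (lam / n) ^ 2) := by
            refine Finset.sum_congr rfl fun i _ => ?_
            rw [Finset.sum_add_distrib, Finset.sum_sub_distrib, ← Finset.mul_sum]
            simp [Finset.sum_const, nsmul_eq_mul]
        _ = (∑ i, ∑ j, dd i j ^ 2) - (2 * (lam / n)) * (∑ i, ∑ j, dd i j)
              + (n:ℝ) * ((n:ℝ) * (lam / n) ^ 2) := by
            rw [Finset.sum_add_distrib, Finset.sum_sub_distrib, ← Finset.mul_sum]
            simp [Finset.sum_const, nsmul_eq_mul]
        _ = _ := by
            rw [hDD, hDsum]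
            field_simp
            ring
    have hmain : 2 * lam * ((α ^ 2 * ((n:ℝ) * n) + (n:ℝ) * (1 - α ^ 2)) - lam ^ 2)
        ≤ (1 - α ^ 2) * n * ((n:ℝ) - lam) := by
      calc 2 * lam * ((α ^ 2 * ((n:ℝ) * n) + (n:ℝ) * (1 - α ^ 2)) - lam ^ 2)
          = 2 * lam * ∑ i, ∑ j, (dd i j - lam / n) ^ 2 := by rw [hD]
        _ = ∑ i, 2 * lam * ∑ j, (dd i j - lam / n) ^ 2 := by rw [Finset.mul_sum]
        _ ≤ ∑ i, (1 - α ^ 2) * n * (dd i i - lam / n) :=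
            Finset.sum_le_sum fun i _ => hperrow i
        _ = (1 - α ^ 2) * n * ∑ i, (dd i i - lam / n) := by rw [← Finset.mul_sum]
        _ = (1 - α ^ 2) * n * ((n:ℝ) - lam) := by rw [hdiag]
    rw [ge_iff_le]
    have hq : (1 - α ^ 2) / 2 * (n:ℝ) * ((n:ℝ) / lam - 1)
        = (1 - α ^ 2) * n * ((n:ℝ) - lam) / (2 * lam) := by
      field_simp
    rw [hq]
    have h3 : (α ^ 2 * ((n:ℝ) * n) + (n:ℝ) * (1 - α ^ 2)) - lam ^ 2
        ≤ (1 - α ^ 2) * n * ((n:ℝ) - lam) / (2 * lam) := by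
      rw [le_div_iff₀ h2l]
      nlinarith [hmain]
    linarith [h3]
  · -- part (b)
    intro mu x hx hx1 hMx
    have hsum0 : ∑ i, x i = 0 := by
      simpa [dotProduct] using hx1
    have hs : 0 < ∑ i, x i ^ 2 := by
      obtain ⟨i, hi⟩ := Function.ne_iff.mp hx
      refine Finset.sum_pos' (fun j _ => sq_nonneg _) ⟨i, Finset.mem_univ i, ?_⟩
      exact (sq_nonneg (x i)).lt_of_ne (Ne.symm (pow_ne_zero 2 hi))
    have hmv : ∀ i, M.mulVec x i = ∑ j, M i j * x j := fun i => by
      simp [Matrix.mulVec, dotProduct]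
    have hW : ∑ a, (∑ i, x i * V i a) ^ 2 = mu * ∑ i, x i ^ 2 := by
      rw [sum_sq_expand]
      calc ∑ i, ∑ j, x i * x j * (∑ a, V i a * V j a)
          = ∑ i, x i * (M.mulVec x i) := by
            refine Finset.sum_congr rfl fun i _ => ?_
            rw [hmv i, Finset.mul_sum]
            refine Finset.sum_congr rfl fun j _ => ?_
            rw [hMd i j]; ring
        _ = ∑ i, x i * (mu * x i) := by
            refine Finset.sum_congr rfl fun i _ => ?_
            rw [hMx]
            simp [Pi.smul_apply, smul_eq_mul]
        _ = mu * ∑ i, x i ^ 2 := by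
            rw [Finset.mul_sum]
            refine Finset.sum_congr rfl fun i _ => ?_; ring
    have h2 := KEY x hsum0
    rw [hW] at h2
    rw [le_div_iff₀ (by linarith : (0:ℝ) < 2 * lam)]
    nlinarith [h2, hs]
end
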